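/- Suppose u is an upper semicontinuous function on an open set X ⊂ ℝⁿ which is not subaffine. Then there exist a point x₀ ∈ X, an affine function a, and ε > 0 such that (u − a)(x) ≤ −ε|x − x₀|² for all x in some neighborhood of x₀, and (u − a)(x₀) = 0. -/

import Mathlib

open Matrix


lemma usc_exists_max {α : Type*} [TopologicalSpace α] {K : Set α}
    (hK : IsCompact K) (hne : K.Nonempty) {v : α → EReal}
    (hv : UpperSemicontinuousOn v K) :
    ∃ x₀ ∈ K, ∀ x ∈ K, v x ≤ v x₀ := by
  by_contra h
  push_neg at h
  choose! m hmK hm using h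
  have hUnhds : ∀ x ∈ K, {z | z ∈ K → v z < v (m x)} ∈ nhds x := by
    intro x hx
    have := hv x hx (v (m x)) (hm x hx)
    rw [eventually_nhdsWithin_iff] at this
    exact this
  obtain ⟨t, htK, hcover⟩ := hK.elim_nhds_subcover _ hUnhds
  have htne : t.Nonempty := by
    obtain ⟨x, hx⟩ := hne
    obtain ⟨y, hy, _⟩ := Set.mem_iUnion₂.1 (hcover hx)
    exact ⟨y, hy⟩
  obtain ⟨xs, hxst, hmaxt⟩ := t.exists_max_image (fun x => v (m x)) htne
  have hmxs := hmK xs (htK _ hxst)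
  obtain ⟨y, hyt, hymem⟩ := Set.mem_iUnion₂.1 (hcover hmxs)
  exact absurd (hmaxt y hyt) (not_le.2 (hymem hmxs))

lemma norm_sq_le_dot {n : ℕ} (y : Fin n → ℝ) : ‖y‖ ^ 2 ≤ y ⬝ᵥ y := by
  have hq : (0:ℝ) ≤ y ⬝ᵥ y := Finset.sum_nonneg fun i _ => mul_self_nonneg _
  have h1 : ‖y‖ ≤ Real.sqrt (y ⬝ᵥ y) := by
    rw [pi_norm_le_iff_of_nonneg (Real.sqrt_nonneg _)]
    intro i
    rw [Real.norm_eq_abs, ← Real.sqrt_sq_eq_abs]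
    apply Real.sqrt_le_sqrt
    rw [sq (y i)]
    exact Finset.single_le_sum (fun j _ => mul_self_nonneg (y j)) (Finset.mem_univ i)
  calc ‖y‖ ^ 2 ≤ Real.sqrt (y ⬝ᵥ y) ^ 2 := pow_le_pow_left₀ (norm_nonneg _) h1 2
    _ = y ⬝ᵥ y := Real.sq_sqrt hq

lemma ereal_helper (y : EReal) (A C : ℝ) (h : y + (A : EReal) ≤ (C : EReal)) :
    y ≤ ((C - A : ℝ) : EReal) := by
  rw [show ((C - A : ℝ) : EReal) = (C : EReal) - (A : EReal) by simp [EReal.coe_sub]]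
  rw [EReal.le_sub_iff_add_le (Or.inl (EReal.coe_ne_bot A)) (Or.inl (EReal.coe_ne_top A))]
  exact h

/-- Lemma A.2: If an upper semicontinuous `[-∞,∞)`-valued function `u` on an
open set `X ⊂ ℝⁿ` is not subaffine, then there are `x₀ ∈ X`, an affine function
`a(x) = ⟨c,x⟩ + d`, and `ε > 0` with `u − a ≤ −ε|x−x₀|²` near `x₀` and `(u−a)(x₀) = 0`. -/
theorem stmt4 (n : ℕ) (X : Set (Fin n → ℝ)) (hX : IsOpen X)
    (u : (Fin n → ℝ) → EReal)
    (husc : UpperSemicontinuousOn u X) (hne : ∀ x ∈ X, u x ≠ ⊤)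
    (hnotsa : ¬ (∀ K : Set (Fin n → ℝ), K ⊆ X → IsCompact K →
        ∀ (c : Fin n → ℝ) (d : ℝ),
          (∀ x ∈ frontier K, u x ≤ ((c ⬝ᵥ x + d : ℝ) : EReal)) →
          ∀ x ∈ K, u x ≤ ((c ⬝ᵥ x + d : ℝ) : EReal))) :
    ∃ x₀ ∈ X, ∃ (c : Fin n → ℝ) (d : ℝ) (ε : ℝ), 0 < ε ∧
      (∀ᶠ x in nhds x₀, u x ≤ ((c ⬝ᵥ x + d - ε * ‖x - x₀‖ ^ 2 : ℝ) : EReal)) ∧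
      u x₀ = ((c ⬝ᵥ x₀ + d : ℝ) : EReal) := by
  push_neg at hnotsa
  obtain ⟨K, hKX, hKc, c, d, hbd, x₁, hx₁K, hx₁⟩ := hnotsa
  -- u x₁ is a finite real
  have hx₁X : x₁ ∈ X := hKX hx₁K
  have h₁top : u x₁ ≠ ⊤ := hne x₁ hx₁X
  have h₁bot : u x₁ ≠ ⊥ := ne_of_gt (lt_of_le_of_lt bot_le hx₁)
  set r₁ : ℝ := (u x₁).toReal with hr₁def
  have hur₁ : u x₁ = (r₁ : EReal) := (EReal.coe_toReal h₁top h₁bot).symm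
  have hr₁ : c ⬝ᵥ x₁ + d < r₁ := by
    rw [hur₁] at hx₁; exact_mod_cast hx₁
  set m₀ : ℝ := r₁ - (c ⬝ᵥ x₁ + d) with hm₀def
  have hm₀ : 0 < m₀ := by simp [hm₀def]; linarith
  -- continuity of the quadratic and linear parts
  have hqc : Continuous fun x : Fin n → ℝ => x ⬝ᵥ x := by
    simp only [dotProduct]
    exact continuous_finset_sum _ fun i _ => (continuous_apply i).mul (continuous_apply i)
  have hLc : Continuous fun x : Fin n → ℝ => c ⬝ᵥ x + d := by
    simp only [dotProduct]
    exact (continuous_finset_sum _ fun i _ => continuous_const.mul (continuous_apply i)).add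
      continuous_const
  -- bound on the quadratic over K
  obtain ⟨xB, hxBK, hBmax⟩ := hKc.exists_isMaxOn ⟨x₁, hx₁K⟩ hqc.continuousOn
  set B : ℝ := xB ⬝ᵥ xB with hBdef
  have hB0 : 0 ≤ B := Finset.sum_nonneg fun i _ => mul_self_nonneg _
  set ε : ℝ := m₀ / (2 * (B + 1)) with hεdef
  have hε : 0 < ε := by positivity
  have hεkey : ε * (2 * (B + 1)) = m₀ := div_mul_cancel₀ _ (by positivity)
  have hεB : ε * B < m₀ := by nlinarith
  -- the perturbed function
  set g : (Fin n → ℝ) → ℝ := fun x => ε * (x ⬝ᵥ x) - (c ⬝ᵥ x + d) with hgdef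
  have hgc : Continuous g := ((continuous_const.mul hqc).sub hLc)
  set v : (Fin n → ℝ) → EReal := fun x => u x + ((g x : ℝ) : EReal) with hvdef
  have hvusc : UpperSemicontinuousOn v K := by
    apply UpperSemicontinuousOn.add' (husc.mono hKX)
      ((continuous_coe_real_ereal.comp hgc).upperSemicontinuous.upperSemicontinuousOn K)
    intro x hx
    apply EReal.continuousAt_add
    · right; exact EReal.coe_ne_bot _
    · right; exact EReal.coe_ne_top _
  obtain ⟨x₀, hx₀K, hmax⟩ := usc_exists_max hKc ⟨x₁, hx₁K⟩ hvusc
  have hKclosed : IsClosed K := hKc.isClosed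
  -- lower bound at x₁
  have hv₁ : ((m₀ : ℝ) : EReal) ≤ v x₁ := by
    rw [hvdef]
    simp only [hur₁, ← EReal.coe_add, EReal.coe_le_coe_iff]
    have hq₁ : 0 ≤ x₁ ⬝ᵥ x₁ := Finset.sum_nonneg fun i _ => mul_self_nonneg _
    simp only [hgdef, hm₀def]
    nlinarith
  -- upper bound on the frontier
  have hfr : ∀ z ∈ frontier K, v z ≤ ((ε * B : ℝ) : EReal) := by
    intro z hz
    have hzK : z ∈ K := hKclosed.frontier_subset hz
    have h1 : v z ≤ ((c ⬝ᵥ z + d : ℝ) : EReal) + ((g z : ℝ) : EReal) :=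
      add_le_add_left (hbd z hz) _
    refine h1.trans ?_
    rw [← EReal.coe_add, EReal.coe_le_coe_iff]
    have hqz : z ⬝ᵥ z ≤ B := hBmax hzK
    simp only [hgdef]
    nlinarith
  -- x₀ is interior
  have hx₀fr : x₀ ∉ frontier K := by
    intro hfr'
    have h1 : ((m₀ : ℝ) : EReal) ≤ ((ε * B : ℝ) : EReal) :=
      le_trans (hv₁.trans (hmax x₁ hx₁K)) (hfr x₀ hfr')
    rw [EReal.coe_le_coe_iff] at h1
    linarith
  have hx₀int : x₀ ∈ interior K := by
    by_contra h
    exact hx₀fr (by rw [hKclosed.frontier_eq]; exact ⟨hx₀K, h⟩)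
  have hx₀X : x₀ ∈ X := hKX hx₀K
  -- u x₀ is a finite real
  have h₀top : u x₀ ≠ ⊤ := hne x₀ hx₀X
  have h₀bot : u x₀ ≠ ⊥ := by
    intro hb
    have hvb : v x₀ = ⊥ := by rw [hvdef]; simp [hb]
    have hle := hv₁.trans (hmax x₁ hx₁K)
    rw [hvb] at hle
    exact (EReal.coe_ne_bot m₀) (le_bot_iff.1 hle)
  set r₀ : ℝ := (u x₀).toReal with hr₀def
  have hur₀ : u x₀ = (r₀ : EReal) := (EReal.coe_toReal h₀top h₀bot).symm
  -- the key inequality on K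
  have hvx₀ : v x₀ = ((r₀ + g x₀ : ℝ) : EReal) := by
    rw [hvdef]; simp [hur₀, ← EReal.coe_add]
  have main : ∀ x ∈ K, u x ≤ (((r₀ + g x₀) - g x : ℝ) : EReal) := by
    intro x hx
    apply ereal_helper
    rw [← hvx₀]
    exact hmax x hx
  -- the affine function
  refine ⟨x₀, hx₀X, c - (2 * ε) • x₀, r₀ - c ⬝ᵥ x₀ + 2 * ε * (x₀ ⬝ᵥ x₀), ε, hε, ?_, ?_⟩
  · filter_upwards [isOpen_interior.mem_nhds hx₀int] with x hx
    have hxK : x ∈ K := interior_subset hx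
    refine (main x hxK).trans ?_
    rw [EReal.coe_le_coe_iff]
    have halg : (r₀ + g x₀) - g x =
        (c - (2 * ε) • x₀) ⬝ᵥ x + (r₀ - c ⬝ᵥ x₀ + 2 * ε * (x₀ ⬝ᵥ x₀))
          - ε * ((x - x₀) ⬝ᵥ (x - x₀)) := by
      have hcomm : x ⬝ᵥ x₀ = x₀ ⬝ᵥ x := dotProduct_comm x x₀
      simp only [hgdef, sub_dotProduct, dotProduct_sub, smul_dotProduct,
        smul_eq_mul, hcomm]
      ring
    rw [halg]
    have := norm_sq_le_dot (x - x₀)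
    nlinarith
  · rw [hur₀, EReal.coe_eq_coe_iff]
    simp only [sub_dotProduct, smul_dotProduct, smul_eq_mul]
    ring
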